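/- Let a = p/q where p and q are nonzero coprime integers with q ≥ 1 and p/q ∉ ℤ exactly when q > 1; a has minimal integer polynomial q·x − p of degree 1. Then ε(a) ≤ min{1/|p|, 1/|q|}. -/

import Mathlib

noncomputable section

/-- The Toeplitz band map Ψ_K^J : ℝ^{K+J+1} → ℝ^{J+1},
(Ψ_K^J t)_i = Σ_{j=0}^K α_j·t_{i+j}. -/
def Psi (K J : ℕ) (α : Fin (K + 1) → ℤ) (t : Fin (K + J + 1) → ℝ) : Fin (J + 1) → ℝ :=
  fun i => ∑ j : Fin (K + 1), (α j : ℝ) * t ⟨i.1 + j.1, by omega⟩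

/-- ε(a) = inf{ε : for every J and every v ∈ ℝ^{K+J+1}, the cube [0,ε]^{K+J+1} meets
P_K^J + v + ℤ^{K+J+1}}, where P_K^J = ker Ψ_K^J and α is the coefficient vector of the
minimal integer polynomial of a. -/
noncomputable def epsA (K : ℕ) (α : Fin (K + 1) → ℤ) : ℝ :=
  sInf {ε : ℝ | ∀ J : ℕ, ∀ v : Fin (K + J + 1) → ℝ,
    ∃ x ∈ Set.Icc (0 : Fin (K + J + 1) → ℝ) (fun _ => ε),
      ∃ p : Fin (K + J + 1) → ℝ, Psi K J α p = 0 ∧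
        ∃ z : Fin (K + J + 1) → ℤ, x = p + v + fun i => (z i : ℝ)}

lemma key (a b : ℤ) (hcop : IsCoprime a b) (hb : b ≠ 0) (n : ℕ) (v : ℕ → ℝ) :
    ∃ s : ℝ, ∀ i ≤ n, Int.fract (s * (a:ℝ)^i * (b:ℝ)^(n-i) + v i) ≤ 1 / |(b:ℝ)| := by
  have hbR : (b:ℝ) ≠ 0 := Int.cast_ne_zero.mpr hb
  have habs : (0:ℝ) < |(b:ℝ)| := abs_pos.mpr hbR
  induction n generalizing v with
  | zero =>
    refine ⟨-v 0, fun i hi => ?_⟩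
    interval_cases i
    rw [show -v 0 * (a:ℝ)^0 * (b:ℝ)^(0-0) + v 0 = 0 by simp, Int.fract_zero]
    positivity
  | succ n ih =>
    obtain ⟨s₀, hs₀⟩ := ih v
    set w : ℝ := s₀ * (a:ℝ)^(n+1) / b + v (n+1) with hw
    set u : ℤ := ⌊w * |(b:ℝ)|⌋ with hu
    have hcp : IsCoprime (a^(n+1)) b := hcop.pow_left
    obtain ⟨x, y, hxy⟩ := hcp
    set k : ℤ := (-(u * b.sign)) * x with hk
    set z : ℤ := (-(u * b.sign)) * y with hz
    have hsign : ((b.sign : ℤ) : ℝ) / (b:ℝ) = 1 / |(b:ℝ)| := by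
      rcases lt_or_gt_of_ne hb with h | h
      · rw [Int.sign_eq_neg_one_of_neg h]
        rw [abs_of_neg (by exact_mod_cast h : (b:ℝ) < 0)]
        push_cast
        field_simp
      · rw [Int.sign_eq_one_of_pos h]
        rw [abs_of_pos (by exact_mod_cast h : (0:ℝ) < b)]
        push_cast
        rfl
    have hkz : (k:ℝ) * (a:ℝ)^(n+1) + (z:ℝ) * (b:ℝ) = -((u:ℝ) * (b.sign : ℝ)) := by
      have : k * a^(n+1) + z * b = (-(u * b.sign)) * (x * a^(n+1) + y * b) := by ring
      rw [hxy, mul_one] at this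
      exact_mod_cast congrArg (fun m : ℤ => (m:ℝ)) this
    refine ⟨(s₀ + k) / b, ?_⟩
    intro i hi
    rcases Nat.lt_or_ge i (n+1) with h | h
    · have e : (s₀ + (k:ℝ)) / b * (a:ℝ)^i * (b:ℝ)^(n+1-i) + v i
           = (s₀ * (a:ℝ)^i * (b:ℝ)^(n-i) + v i) + ((k * a^i * b^(n-i) : ℤ) : ℝ) := by
        have e1 : n + 1 - i = (n - i) + 1 := by omega
        rw [e1, pow_succ]
        push_cast
        field_simp
        ring
      rw [e, Int.fract_add_intCast]
      exact hs₀ i (by omega)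
    · have hi' : i = n + 1 := by omega
      subst hi'
      have e : (s₀ + (k:ℝ)) / b * (a:ℝ)^(n+1) * (b:ℝ)^(n+1-(n+1)) + v (n+1)
           = (w - (u:ℝ) / |(b:ℝ)|) + ((-z : ℤ) : ℝ) := by
        rw [Nat.sub_self, pow_zero, mul_one]
        have : (s₀ + (k:ℝ)) / b * (a:ℝ)^(n+1) = s₀ * (a:ℝ)^(n+1) / b + ((k:ℝ) * (a:ℝ)^(n+1)) / b := by
          ring
        rw [this]
        have : ((k:ℝ) * (a:ℝ)^(n+1)) / b = (-((u:ℝ) * (b.sign:ℝ)) - (z:ℝ) * b) / b := by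
          rw [← hkz]; ring
        rw [this]
        have hs2 : (-((u:ℝ) * (b.sign:ℝ)) - (z:ℝ) * (b:ℝ)) / (b:ℝ)
            = -((u:ℝ) / |(b:ℝ)|) - (z:ℝ) := by
          rw [sub_div, neg_div, mul_div_assoc, hsign, mul_div_assoc, div_self hbR]
          ring
        rw [hs2, hw]
        push_cast
        ring
      rw [e, Int.fract_add_intCast]
      have hval : w - (u:ℝ)/|(b:ℝ)| = Int.fract (w * |(b:ℝ)|) / |(b:ℝ)| := by
        rw [Int.fract]
        field_simp [hu]
        rw [hu]
      rw [hval]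
      have h0 : 0 ≤ Int.fract (w * |(b:ℝ)|) / |(b:ℝ)| := by
        apply div_nonneg (Int.fract_nonneg _) habs.le
      have h1 : Int.fract (w * |(b:ℝ)|) / |(b:ℝ)| < 1 / |(b:ℝ)| :=
        (div_lt_div_iff_of_pos_right habs).mpr (Int.fract_lt_one _)
      have hb1 : 1 / |(b:ℝ)| ≤ 1 := by
        rw [div_le_one habs]
        exact_mod_cast Int.one_le_abs hb
      rw [Int.fract_eq_self.mpr ⟨h0, lt_of_lt_of_le h1 hb1⟩]
      exact h1.le

/-- for a = p/q with p, q nonzero coprime integers, q ≥ 1 (so that the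
minimal integer polynomial of a is q·x − p, with coefficient vector α₀ = −p, α₁ = q),
one has ε(a) ≤ min{1/|p|, 1/|q|}. -/
theorem stmt12 (p q : ℤ) (hp : p ≠ 0) (hq : 1 ≤ q) (hcop : IsCoprime p q) :
    epsA 1 ![-p, q] ≤ min (1 / |(p : ℝ)|) (1 / |(q : ℝ)|) := by
  have hq0 : q ≠ 0 := by omega
  set ε : ℝ := min (1 / |(p : ℝ)|) (1 / |(q : ℝ)|) with hε
  apply csInf_le
  · refine ⟨0, fun e he => ?_⟩
    obtain ⟨x, hx, _⟩ := he 0 0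
    rw [Set.mem_Icc] at hx
    have h0 := hx.1 (0 : Fin (1 + 0 + 1))
    have h1 := hx.2 (0 : Fin (1 + 0 + 1))
    simpa using le_trans h0 h1
  · intro J v
    set n : ℕ := J + 1 with hn
    have key' : ∃ s : ℝ, ∀ i : Fin (1 + J + 1),
        Int.fract (s * (p:ℝ)^(i:ℕ) * (q:ℝ)^(n-(i:ℕ)) + v i) ≤ ε := by
      rcases le_total (1/|(p:ℝ)|) (1/|(q:ℝ)|) with hle | hle
      · -- ε = 1/|p|, use key with (q, p), reversed indices
        obtain ⟨s, hs⟩ := key q p hcop.symm hp n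
          (fun m => if h : n - m < 1 + J + 1 then v ⟨n - m, h⟩ else 0)
        refine ⟨s, fun i => ?_⟩
        have h1 : (i:ℕ) ≤ n := by omega
        have := hs (n - (i:ℕ)) (by omega)
        have e1 : n - (n - (i:ℕ)) = (i:ℕ) := by omega
        rw [e1] at this
        simp only [dif_pos i.2] at this
        rw [hε, min_eq_left hle]
        rw [show s * (p:ℝ)^(i:ℕ) * (q:ℝ)^(n-(i:ℕ)) = s * (q:ℝ)^(n-(i:ℕ)) * (p:ℝ)^(i:ℕ) by ring]
        exact this
      · -- ε = 1/|q|, use key with (p, q)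
        obtain ⟨s, hs⟩ := key p q hcop hq0 n
          (fun m => if h : m < 1 + J + 1 then v ⟨m, h⟩ else 0)
        refine ⟨s, fun i => ?_⟩
        have := hs (i:ℕ) (by omega)
        simp only [dif_pos i.2] at this
        rw [hε, min_eq_right hle]
        exact this
    obtain ⟨s, hs⟩ := key'
    set t : Fin (1 + J + 1) → ℝ := fun i => s * (p:ℝ)^(i:ℕ) * (q:ℝ)^(n-(i:ℕ)) with ht
    refine ⟨fun i => Int.fract (t i + v i), ?_, t, ?_, fun i => -⌊t i + v i⌋, ?_⟩
    · rw [Set.mem_Icc]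
      constructor
      · intro i; exact Int.fract_nonneg _
      · intro i; exact hs i
    · funext i
      have hij : (i:ℕ) ≤ J := by omega
      have e1 : n - (i:ℕ) = (n - ((i:ℕ)+1)) + 1 := by omega
      simp only [Psi, Fin.sum_univ_succ, Finset.univ_eq_empty, Finset.sum_empty,
        Matrix.cons_val_zero, Matrix.cons_val_one, Matrix.head_cons, Fin.val_zero,
        Fin.val_succ, add_zero, Pi.zero_apply, Fin.succ_zero_eq_one, ht]
      push_cast
      rw [e1]
      ring
    · funext i
      show Int.fract (t i + v i) = t i + v i + ((-⌊t i + v i⌋ : ℤ) : ℝ)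
      rw [Int.fract]
      push_cast
      ring
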